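/- Let λ₁, λ₂ > 0 and k₁, k₂ ∈ ℝ, set ω = λ₁(k₁² + k₂²), assume ω/λ₂ − k₂² ≥ 0 and set k = √(ω/λ₂ − k₂²), assume λ₁k₁ + λ₂k ≠ 0 and set γ = (λ₁k₁ − λ₂k)/(λ₁k₁ + λ₂k). Define u(x,y,t) = cos(k₁x + k₂y)e^{−ωt} + γ cos(k₁x − k₂y)e^{−ωt} and v(x,y,t) = (1+γ) cos(kx + k₂y)e^{−ωt}. Then for all (x,y,t) ∈ ℝ³: ∂u/∂t = λ₁(∂²u/∂x² + ∂²u/∂y²) and ∂v/∂t = λ₂(∂²v/∂x² + ∂²v/∂y²); and for all (y,t) ∈ ℝ²: u(0,y,t) = v(0,y,t) and λ₁ ∂u/∂x(0,y,t) = λ₂ ∂v/∂x(0,y,t). -/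

import Mathlib

private lemma hd_lin (a b x : ℝ) : HasDerivAt (fun s : ℝ => a * s + b) a x := by
  simpa using ((hasDerivAt_id x).const_mul a).add_const b

private lemma hd_c (a b c x : ℝ) :
    HasDerivAt (fun s => Real.cos (a * s + b) * c) (Real.sin (a * x + b) * (-a * c)) x := by
  have h := ((Real.hasDerivAt_cos (a * x + b)).comp x (hd_lin a b x)).mul_const c
  exact h.congr_deriv (by ring)

private lemma hd_s (a b c x : ℝ) :
    HasDerivAt (fun s => Real.sin (a * s + b) * c) (Real.cos (a * x + b) * (a * c)) x := by
  have h := ((Real.hasDerivAt_sin (a * x + b)).comp x (hd_lin a b x)).mul_const c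
  exact h.congr_deriv (by ring)

private lemma hd_cc (a b c a' b' c' x : ℝ) :
    HasDerivAt (fun s => Real.cos (a * s + b) * c + Real.cos (a' * s + b') * c')
      (Real.sin (a * x + b) * (-a * c) + Real.sin (a' * x + b') * (-a' * c')) x :=
  (hd_c a b c x).add (hd_c a' b' c' x)

private lemma hd_ss (a b c a' b' c' x : ℝ) :
    HasDerivAt (fun s => Real.sin (a * s + b) * c + Real.sin (a' * s + b') * c')
      (Real.cos (a * x + b) * (a * c) + Real.cos (a' * x + b') * (a' * c')) x :=
  (hd_s a b c x).add (hd_s a' b' c' x)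

private lemma hd_exp (c d x : ℝ) :
    HasDerivAt (fun s => c * Real.exp (d * s)) (c * d * Real.exp (d * x)) x := by
  have h := ((Real.hasDerivAt_exp (d * x)).comp x (by simpa using (hasDerivAt_id x).const_mul d)).const_mul c
  exact h.congr_deriv (by ring)

theorem stmt12 (l1 l2 k1 k2 : ℝ) (hl1 : 0 < l1) (hl2 : 0 < l2)
    (ω : ℝ) (hω : ω = l1 * (k1 ^ 2 + k2 ^ 2))
    (hpos : 0 ≤ ω / l2 - k2 ^ 2) (k : ℝ) (hk : k = Real.sqrt (ω / l2 - k2 ^ 2))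
    (hden : l1 * k1 + l2 * k ≠ 0)
    (γ : ℝ) (hγ : γ = (l1 * k1 - l2 * k) / (l1 * k1 + l2 * k))
    (u v : ℝ → ℝ → ℝ → ℝ)
    (hu : ∀ x y t, u x y t =
      Real.cos (k1 * x + k2 * y) * Real.exp (-ω * t)
        + γ * Real.cos (k1 * x - k2 * y) * Real.exp (-ω * t))
    (hv : ∀ x y t, v x y t = (1 + γ) * Real.cos (k * x + k2 * y) * Real.exp (-ω * t)) :
    (∀ x y t : ℝ, deriv (fun s => u x y s) t =
      l1 * (deriv (fun s => deriv (fun r => u r y t) s) x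
        + deriv (fun s => deriv (fun r => u x r t) s) y)) ∧
    (∀ x y t : ℝ, deriv (fun s => v x y s) t =
      l2 * (deriv (fun s => deriv (fun r => v r y t) s) x
        + deriv (fun s => deriv (fun r => v x r t) s) y)) ∧
    (∀ y t : ℝ, u 0 y t = v 0 y t) ∧
    (∀ y t : ℝ, l1 * deriv (fun s => u s y t) 0 = l2 * deriv (fun s => v s y t) 0) := by
  have hk2 : k ^ 2 = ω / l2 - k2 ^ 2 := by rw [hk, Real.sq_sqrt hpos]
  have hωv : ω = l2 * (k ^ 2 + k2 ^ 2) := by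
    rw [hk2]; field_simp; ring
  -- x-derivatives of u
  have hux : ∀ y t x : ℝ, deriv (fun r => u r y t) x
      = Real.sin (k1 * x + k2 * y) * (-k1 * Real.exp (-ω * t))
        + Real.sin (k1 * x + -(k2 * y)) * (-k1 * (γ * Real.exp (-ω * t))) := by
    intro y t x
    have he : (fun r => u r y t) = fun r => Real.cos (k1 * r + k2 * y) * Real.exp (-ω * t)
        + Real.cos (k1 * r + -(k2 * y)) * (γ * Real.exp (-ω * t)) := by
      funext r; rw [hu]; ring_nf
    rw [he]; exact (hd_cc _ _ _ _ _ _ x).deriv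
  have huxx : ∀ y t x : ℝ, deriv (fun s => deriv (fun r => u r y t) s) x
      = Real.cos (k1 * x + k2 * y) * (k1 * (-k1 * Real.exp (-ω * t)))
        + Real.cos (k1 * x + -(k2 * y)) * (k1 * (-k1 * (γ * Real.exp (-ω * t)))) := by
    intro y t x
    have he : (fun s => deriv (fun r => u r y t) s)
        = fun s => Real.sin (k1 * s + k2 * y) * (-k1 * Real.exp (-ω * t))
          + Real.sin (k1 * s + -(k2 * y)) * (-k1 * (γ * Real.exp (-ω * t))) := by
      funext s; exact hux y t s
    rw [he]; exact (hd_ss _ _ _ _ _ _ x).deriv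
  have huyy : ∀ x t y : ℝ, deriv (fun s => deriv (fun r => u x r t) s) y
      = Real.cos (k2 * y + k1 * x) * (k2 * (-k2 * Real.exp (-ω * t)))
        + Real.cos (-k2 * y + k1 * x) * (-k2 * (- -k2 * (γ * Real.exp (-ω * t)))) := by
    intro x t y
    have he1 : ∀ r, (fun r => u x r t) r = Real.cos (k2 * r + k1 * x) * Real.exp (-ω * t)
        + Real.cos (-k2 * r + k1 * x) * (γ * Real.exp (-ω * t)) := by
      intro r; show u x r t = _; rw [hu]; ring_nf
    have he : (fun s => deriv (fun r => u x r t) s)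
        = fun s => Real.sin (k2 * s + k1 * x) * (-k2 * Real.exp (-ω * t))
          + Real.sin (-k2 * s + k1 * x) * (- -k2 * (γ * Real.exp (-ω * t))) := by
      funext s
      rw [funext he1]
      exact (hd_cc _ _ _ _ _ _ s).deriv
    rw [he]
    have := (hd_ss k2 (k1*x) (-k2 * Real.exp (-ω * t)) (-k2) (k1*x)
      (- -k2 * (γ * Real.exp (-ω * t))) y).deriv
    rw [this]; try ring
  have hut : ∀ x y t : ℝ, deriv (fun s => u x y s) t
      = (Real.cos (k1 * x + k2 * y) + γ * Real.cos (k1 * x - k2 * y)) * (-ω)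
          * Real.exp (-ω * t) := by
    intro x y t
    have he : (fun s => u x y s)
        = fun s => (Real.cos (k1 * x + k2 * y) + γ * Real.cos (k1 * x - k2 * y))
            * Real.exp (-ω * s) := by
      funext s; rw [hu]; ring
    rw [he]; exact (hd_exp _ _ t).deriv
  have hvx : ∀ y t x : ℝ, deriv (fun r => v r y t) x
      = Real.sin (k * x + k2 * y) * (-k * ((1 + γ) * Real.exp (-ω * t))) := by
    intro y t x
    have he : (fun r => v r y t)
        = fun r => Real.cos (k * r + k2 * y) * ((1 + γ) * Real.exp (-ω * t)) := by
      funext r; rw [hv]; ring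
    rw [he]; exact (hd_c _ _ _ x).deriv
  have hvxx : ∀ y t x : ℝ, deriv (fun s => deriv (fun r => v r y t) s) x
      = Real.cos (k * x + k2 * y) * (k * (-k * ((1 + γ) * Real.exp (-ω * t)))) := by
    intro y t x
    rw [funext (hvx y t)]; exact (hd_s _ _ _ x).deriv
  have hvyy : ∀ x t y : ℝ, deriv (fun s => deriv (fun r => v x r t) s) y
      = Real.cos (k2 * y + k * x) * (k2 * (-k2 * ((1 + γ) * Real.exp (-ω * t)))) := by
    intro x t y
    have he : (fun r => v x r t)
        = fun r => Real.cos (k2 * r + k * x) * ((1 + γ) * Real.exp (-ω * t)) := by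
      funext r; rw [hv]; ring_nf
    have he2 : (fun s => deriv (fun r => v x r t) s)
        = fun s => Real.sin (k2 * s + k * x) * (-k2 * ((1 + γ) * Real.exp (-ω * t))) := by
      funext s; rw [he]; exact (hd_c _ _ _ s).deriv
    rw [he2]; exact (hd_s _ _ _ y).deriv
  have hvt : ∀ x y t : ℝ, deriv (fun s => v x y s) t
      = (1 + γ) * Real.cos (k * x + k2 * y) * (-ω) * Real.exp (-ω * t) := by
    intro x y t
    have he : (fun s => v x y s)
        = fun s => ((1 + γ) * Real.cos (k * x + k2 * y)) * Real.exp (-ω * s) := by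
      funext s; rw [hv]; try ring
    rw [he]
    have := (hd_exp ((1 + γ) * Real.cos (k * x + k2 * y)) (-ω) t).deriv
    rw [this]; try ring
  refine ⟨fun x y t => ?_, fun x y t => ?_, fun y t => ?_, fun y t => ?_⟩
  · rw [hut, huxx, huyy]
    have h1 : k1 * x - k2 * y = k1 * x + -(k2 * y) := by ring
    have h2 : -k2 * y + k1 * x = k1 * x + -(k2 * y) := by ring
    have h3 : k2 * y + k1 * x = k1 * x + k2 * y := by ring
    rw [h1, h2, h3, hω]; try ring
  · rw [hvt, hvxx, hvyy]
    have h3 : k2 * y + k * x = k * x + k2 * y := by ring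
    rw [h3, hωv]; try ring
  · rw [hu, hv]
    have h1 : k1 * 0 + k2 * y = k2 * y := by ring
    have h2 : k1 * 0 - k2 * y = -(k2 * y) := by ring
    have h3 : k * 0 + k2 * y = k2 * y := by ring
    rw [h1, h2, h3, Real.cos_neg]; ring
  · rw [hux, hvx]
    have h1 : k1 * 0 + k2 * y = k2 * y := by ring
    have h2 : k1 * 0 + -(k2 * y) = -(k2 * y) := by ring
    have h3 : k * 0 + k2 * y = k2 * y := by ring
    rw [h1, h2, h3, Real.sin_neg, hγ]
    field_simp
    ring
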